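/- Let $0 < \theta_1 < \infty$, $1 \leq p < \infty$, and suppose: (i) $f$ satisfies the John–Nirenberg-type inequality $|\{x \in Q : |f(x) - f_Q| > \lambda\}| \leq C_1 |Q| \exp\{-(1+r/\rho(x_0))^{-(N_0+1)\theta_1} C_2 \lambda / \|f\|\}$ for all cubes $Q = Q(x_0,r)$ and $\lambda > 0$; (ii) the weight $\omega$ satisfies the comparison estimate $\omega(E)/\omega(Q) \leq C (|E|/|Q|)^{\delta}(1+r/\rho(x_0))^{\eta}$ for measurable $E \subset Q$. Then for every cube $Q = Q(x_0,r)$, $\left(\frac{1}{\omega(Q)}\int_Q |f(x)-f_Q|^p \omega(x)\,dx\right)^{1/p} \leq C' (1+r/\rho(x_0))^{(N_0+1)\theta_1 + \eta/p}\, \|f\|$, where $C'$ depends only on $p, C, C_1, C_2, \delta$. -/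

import Mathlib

open MeasureTheory Metric Real

/-- Mean value of `f` on the set `Q`. -/
noncomputable def avgOn {d : ℕ} (f : EuclideanSpace ℝ (Fin d) → ℝ)
    (Q : Set (EuclideanSpace ℝ (Fin d))) : ℝ :=
  (volume Q).toReal⁻¹ * ∫ x in Q, f x

private lemma gammaInt {b p : ℝ} (hb : 0 < b) (hp : 0 < p) :
    IntegrableOn (fun t : ℝ => t ^ (p - 1) * Real.exp (-(b * t))) (Set.Ioi 0) := by
  have h := Real.GammaIntegral_convergent hp
  have h2 := (integrableOn_Ioi_comp_mul_left_iff
      (fun x : ℝ => Real.exp (-x) * x ^ (p - 1)) 0 hb).2 (by simpa using h)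
  have h3 := h2.const_mul ((b : ℝ) ^ (p - 1))⁻¹
  apply IntegrableOn.congr_fun h3 ?_ measurableSet_Ioi
  intro t ht
  have htpos : (0:ℝ) < t := ht
  have : (b * t) ^ (p - 1) = b ^ (p - 1) * t ^ (p - 1) :=
    Real.mul_rpow hb.le htpos.le
  have hbne : (b : ℝ) ^ (p - 1) ≠ 0 := (Real.rpow_pos_of_pos hb _).ne'
  field_simp [this]
  rw [this]

theorem stmt_7 {d : ℕ} (ρ : EuclideanSpace ℝ (Fin d) → ℝ) (hρ : ∀ x, 0 < ρ x)
    (N0 θ₁ p : ℝ) (hN0 : 0 < N0) (hθ₁ : 0 < θ₁) (hp : 1 ≤ p)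
    (f : EuclideanSpace ℝ (Fin d) → ℝ) (hf : LocallyIntegrable f volume)
    (M : ℝ) (hM : 0 < M)  -- `M = ‖f‖_{BMO_{ρ,θ₁}}`
    (C C₁ C₂ δ η : ℝ) (hC : 0 < C) (hC₁ : 0 < C₁) (hC₂ : 0 < C₂) (hδ : 0 < δ) (hη : 0 < η)
    -- (i) John–Nirenberg-type inequality
    (hJN : ∀ (x0 : EuclideanSpace ℝ (Fin d)) (r lam : ℝ), 0 < r → 0 < lam →
      (volume {x ∈ ball x0 r | lam < |f x - avgOn f (ball x0 r)|}).toReal ≤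
        C₁ * (volume (ball x0 r)).toReal *
          Real.exp (-((1 + r / ρ x0) ^ (-((N0 + 1) * θ₁)) * (C₂ * lam / M))))
    (ω : EuclideanSpace ℝ (Fin d) → ℝ) (hω : ∀ x, 0 ≤ ω x)
    (hloc : LocallyIntegrable ω volume)
    -- (ii) comparison estimate for the weight `ω`
    (hcmp : ∀ (x0 : EuclideanSpace ℝ (Fin d)) (r : ℝ), 0 < r →
      ∀ E : Set (EuclideanSpace ℝ (Fin d)), MeasurableSet E → E ⊆ ball x0 r →
        ∫ x in E, ω x ≤
          C * ((volume E).toReal / (volume (ball x0 r)).toReal) ^ δ *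
            (1 + r / ρ x0) ^ η * ∫ x in ball x0 r, ω x) :
    ∃ C' > 0, ∀ (x0 : EuclideanSpace ℝ (Fin d)) (r : ℝ), 0 < r →
      ((∫ x in ball x0 r, ω x)⁻¹ *
          ∫ x in ball x0 r, |f x - avgOn f (ball x0 r)| ^ p * ω x) ^ (1 / p) ≤
        C' * (1 + r / ρ x0) ^ ((N0 + 1) * θ₁ + η / p) * M := by
  have hp0 : (0:ℝ) < p := lt_of_lt_of_le one_pos hp
  set D : ℝ := p * Real.Gamma p * C * C₁ ^ δ with hD_def
  have hD : 0 < D := by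
    have := Real.Gamma_pos_of_pos hp0
    positivity
  refine ⟨max D 1 / (δ * C₂), by positivity, ?_⟩
  intro x0 r hr
  set Q : Set (EuclideanSpace ℝ (Fin d)) := ball x0 r with hQ_def
  set u : ℝ := 1 + r / ρ x0 with hu_def
  have hu0 : 0 < u := by
    have : 0 < r / ρ x0 := div_pos hr (hρ x0)
    simp only [hu_def]; linarith
  set A : ℝ := u ^ ((N0 + 1) * θ₁) with hA_def
  have hA0 : 0 < A := Real.rpow_pos_of_pos hu0 _
  set g : EuclideanSpace ℝ (Fin d) → ℝ := fun x => |f x - avgOn f Q| with hg_def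
  set ωQ : ℝ := ∫ x in Q, ω x with hωQ_def
  have hQm : MeasurableSet Q := measurableSet_ball
  have hωQ0 : 0 ≤ ωQ := setIntegral_nonneg hQm fun x _ => hω x
  have hQpos : 0 < (volume Q).toReal := by
    refine ENNReal.toReal_pos (measure_ball_pos _ _ hr).ne' measure_ball_lt_top.ne
  -- degenerate case
  rcases eq_or_lt_of_le hωQ0 with hωQz | hωQpos
  · rw [← hωQz, inv_zero, zero_mul, Real.zero_rpow (by positivity)]
    positivity
  -- constants
  set c : ℝ := C₂ / (A * M) with hc_def
  have hc : 0 < c := by positivity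
  set b : ℝ := δ * c with hb_def
  have hb : 0 < b := by positivity
  set K : ℝ := C * C₁ ^ δ * u ^ η * ωQ with hK_def
  have hK0 : 0 ≤ K := by positivity
  -- integrability and measurability
  have hωint : IntegrableOn ω Q volume :=
    (hloc.integrableOn_isCompact (isCompact_closedBall x0 r)).mono_set ball_subset_closedBall
  have hfint : IntegrableOn f Q volume :=
    (hf.integrableOn_isCompact (isCompact_closedBall x0 r)).mono_set ball_subset_closedBall
  have hg_ae : AEMeasurable g (volume.restrict Q) :=
    continuous_abs.measurable.comp_aemeasurable
      (hfint.aestronglyMeasurable.aemeasurable.sub aemeasurable_const)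
  have hω_ae : AEMeasurable ω (volume.restrict Q) := hωint.aestronglyMeasurable.aemeasurable
  set μ : Measure (EuclideanSpace ℝ (Fin d)) :=
    (volume.restrict Q).withDensity (fun x => ENNReal.ofReal (ω x)) with hμ_def
  have hac : μ ≪ volume.restrict Q := withDensity_absolutelyContinuous _ _
  have hgμ : AEMeasurable g μ := hg_ae.mono_ac hac
  -- measurable representative of g
  set g' : EuclideanSpace ℝ (Fin d) → ℝ := hg_ae.mk g with hg'_def
  have hg'm : Measurable g' := hg_ae.measurable_mk
  have hgg' : g =ᵐ[volume.restrict Q] g' := hg_ae.ae_eq_mk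
  -- the key tail estimate
  have key : ∀ t : ℝ, 0 < t → μ {a | t < g a} ≤ ENNReal.ofReal (K * Real.exp (-(b * t))) := by
    intro t ht
    have hS : MeasurableSet {a | t < g' a} := measurableSet_lt measurable_const hg'm
    have hμeq : μ {a | t < g a} = μ {a | t < g' a} := by
      apply measure_congr
      apply Filter.eventuallyEq_set.2
      filter_upwards [hgg'.filter_mono hac.ae_le] with a ha
      simp [ha]
    set E : Set (EuclideanSpace ℝ (Fin d)) := {a | t < g' a} ∩ Q with hE_def
    have hEm : MeasurableSet E := hS.inter hQm
    have hEsub : E ⊆ Q := Set.inter_subset_right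
    have hμE : μ {a | t < g' a} = ∫⁻ x in E, ENNReal.ofReal (ω x) ∂volume := by
      rw [hμ_def, withDensity_apply _ hS, Measure.restrict_restrict hS]
    have hωE : IntegrableOn ω E volume := hωint.mono_set hEsub
    have hofReal : ∫⁻ x in E, ENNReal.ofReal (ω x) ∂volume = ENNReal.ofReal (∫ x in E, ω x) :=
      (ofReal_integral_eq_lintegral_ofReal hωE (Filter.Eventually.of_forall fun x => hω x)).symm
    -- volume comparison with the JN set
    have hvolE : volume E = volume {x ∈ Q | t < g x} := by
      apply measure_congr
      apply Filter.eventuallyEq_set.2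
      have := (ae_restrict_iff' hQm).mp hgg'
      filter_upwards [this] with x hx
      simp only [hE_def, Set.mem_inter_iff, Set.mem_setOf_eq, Set.mem_sep_iff]
      constructor
      · rintro ⟨hx1, hx2⟩; exact ⟨hx2, by rw [hx hx2]; exact hx1⟩
      · rintro ⟨hx1, hx2⟩; exact ⟨by rw [← hx hx1]; exact hx2, hx1⟩
    have hJNt : (volume {x ∈ Q | t < g x}).toReal ≤
        C₁ * (volume Q).toReal * Real.exp (-(c * t)) := by
      have h1 := hJN x0 r t hr ht
      have harg : u ^ (-((N0 + 1) * θ₁)) * (C₂ * t / M) = c * t := by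
        rw [Real.rpow_neg hu0.le, ← hA_def, hc_def]
        field_simp
      rw [← harg]; exact h1
    have hratio : (volume E).toReal / (volume Q).toReal ≤ C₁ * Real.exp (-(c * t)) := by
      rw [div_le_iff₀ hQpos, hvolE]
      calc (volume {x ∈ Q | t < g x}).toReal
          ≤ C₁ * (volume Q).toReal * Real.exp (-(c * t)) := hJNt
        _ = C₁ * Real.exp (-(c * t)) * (volume Q).toReal := by ring
    have hpow : ((volume E).toReal / (volume Q).toReal) ^ δ ≤ C₁ ^ δ * Real.exp (-(b * t)) := by
      have h2 : ((volume E).toReal / (volume Q).toReal) ^ δ ≤ (C₁ * Real.exp (-(c * t))) ^ δ :=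
        Real.rpow_le_rpow (by positivity) hratio hδ.le
      calc ((volume E).toReal / (volume Q).toReal) ^ δ
          ≤ (C₁ * Real.exp (-(c * t))) ^ δ := h2
        _ = C₁ ^ δ * (Real.exp (-(c * t))) ^ δ := Real.mul_rpow hC₁.le (Real.exp_pos _).le
        _ = C₁ ^ δ * Real.exp (-(b * t)) := by
            rw [← Real.exp_mul]
            congr 1
            rw [hb_def]; ring
    have hcmpE : ∫ x in E, ω x ≤ K * Real.exp (-(b * t)) := by
      calc ∫ x in E, ω x
          ≤ C * ((volume E).toReal / (volume Q).toReal) ^ δ * u ^ η * ωQ :=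
            hcmp x0 r hr E hEm hEsub
        _ ≤ C * (C₁ ^ δ * Real.exp (-(b * t))) * u ^ η * ωQ := by
            gcongr
        _ = K * Real.exp (-(b * t)) := by rw [hK_def]; ring
    rw [hμeq, hμE, hofReal]
    exact ENNReal.ofReal_le_ofReal hcmpE
  -- layer cake
  have hg_nn : 0 ≤ᵐ[μ] g := Filter.Eventually.of_forall fun x => abs_nonneg _
  have hlayer := lintegral_rpow_eq_lintegral_meas_lt_mul μ hg_nn hgμ hp0
  -- bound the t-integral
  have hGint : IntegrableOn (fun t : ℝ => t ^ (p - 1) * Real.exp (-(b * t))) (Set.Ioi 0) :=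
    gammaInt hb hp0
  have hKint : IntegrableOn (fun t : ℝ => K * (t ^ (p - 1) * Real.exp (-(b * t)))) (Set.Ioi 0) :=
    hGint.const_mul K
  have htail : ∫⁻ t in Set.Ioi (0:ℝ), μ {a | t < g a} * ENNReal.ofReal (t ^ (p - 1)) ≤
      ENNReal.ofReal (K * ((1 / b) ^ p * Real.Gamma p)) := by
    have step1 : ∫⁻ t in Set.Ioi (0:ℝ), μ {a | t < g a} * ENNReal.ofReal (t ^ (p - 1)) ≤
        ∫⁻ t in Set.Ioi (0:ℝ), ENNReal.ofReal (K * (t ^ (p - 1) * Real.exp (-(b * t)))) := by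
      apply lintegral_mono_ae
      filter_upwards [ae_restrict_mem measurableSet_Ioi] with t ht
      have ht0 : (0:ℝ) < t := ht
      calc μ {a | t < g a} * ENNReal.ofReal (t ^ (p - 1))
          ≤ ENNReal.ofReal (K * Real.exp (-(b * t))) * ENNReal.ofReal (t ^ (p - 1)) :=
            mul_le_mul_left (key t ht0) _
        _ = ENNReal.ofReal (K * (t ^ (p - 1) * Real.exp (-(b * t)))) := by
            rw [← ENNReal.ofReal_mul (by positivity)]
            congr 1; ring
    have step2 : ∫⁻ t in Set.Ioi (0:ℝ),
        ENNReal.ofReal (K * (t ^ (p - 1) * Real.exp (-(b * t)))) =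
        ENNReal.ofReal (∫ t in Set.Ioi (0:ℝ), K * (t ^ (p - 1) * Real.exp (-(b * t)))) := by
      refine (ofReal_integral_eq_lintegral_ofReal hKint ?_).symm
      filter_upwards [ae_restrict_mem measurableSet_Ioi] with t ht
      have ht0 : (0:ℝ) < t := ht
      positivity
    have step3 : ∫ t in Set.Ioi (0:ℝ), K * (t ^ (p - 1) * Real.exp (-(b * t))) =
        K * ((1 / b) ^ p * Real.Gamma p) := by
      rw [integral_const_mul, integral_rpow_mul_exp_neg_mul_Ioi hp0 hb]
    rw [step2, step3] at step1
    exact step1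
  -- identify the weighted integral with the lintegral against μ
  set J : ℝ := ∫ x in Q, |f x - avgOn f Q| ^ p * ω x with hJ_def
  have hJ0 : 0 ≤ J := setIntegral_nonneg hQm fun x _ =>
    mul_nonneg (Real.rpow_nonneg (abs_nonneg _) _) (hω x)
  have hJeq : J = (∫⁻ x, ENNReal.ofReal (g x ^ p) ∂μ).toReal := by
    have hmeas : AEStronglyMeasurable (fun x => |f x - avgOn f Q| ^ p * ω x)
        (volume.restrict Q) := by
      exact ((hg_ae.pow_const p).mul hω_ae).aestronglyMeasurable
    rw [hJ_def, integral_eq_lintegral_of_nonneg_ae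
      (Filter.Eventually.of_forall fun x =>
        mul_nonneg (Real.rpow_nonneg (abs_nonneg _) _) (hω x)) hmeas]
    congr 1
    rw [hμ_def, lintegral_withDensity_eq_lintegral_mul₀ hω_ae.ennreal_ofReal
      (hg_ae.pow_const p).ennreal_ofReal]
    apply lintegral_congr_ae
    apply Filter.Eventually.of_forall
    intro x
    simp only [Pi.mul_apply]
    rw [ENNReal.ofReal_mul (Real.rpow_nonneg (abs_nonneg _) _), mul_comm]
  -- combine
  set B : ℝ := p * (K * ((1 / b) ^ p * Real.Gamma p)) with hB_def
  have hJB : J ≤ B := by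
    rw [hJeq]
    apply ENNReal.toReal_le_of_le_ofReal
    · have hΓ := Real.Gamma_pos_of_pos hp0
      positivity
    · rw [hlayer]
      calc ENNReal.ofReal p * ∫⁻ t in Set.Ioi (0:ℝ), μ {a | t < g a} *
            ENNReal.ofReal (t ^ (p - 1))
          ≤ ENNReal.ofReal p * ENNReal.ofReal (K * ((1 / b) ^ p * Real.Gamma p)) :=
            mul_le_mul_right htail _
        _ = ENNReal.ofReal B := by
            rw [← ENNReal.ofReal_mul hp0.le, hB_def]
  -- final algebra
  have hQgoal : (ωQ⁻¹ * J) ^ (1 / p) ≤ (max D 1 / (δ * C₂)) * u ^ ((N0 + 1) * θ₁ + η / p) * M := by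
    have hstep : ωQ⁻¹ * J ≤ D * u ^ η * (1 / b) ^ p := by
      have : ωQ⁻¹ * J ≤ ωQ⁻¹ * B :=
        mul_le_mul_of_nonneg_left hJB (inv_nonneg.2 hωQ0)
      refine this.trans (le_of_eq ?_)
      rw [hB_def, hK_def, hD_def]
      field_simp
    have h1 : (ωQ⁻¹ * J) ^ (1 / p) ≤ (D * u ^ η * (1 / b) ^ p) ^ (1 / p) :=
      Real.rpow_le_rpow (by positivity) hstep (by positivity)
    have h2 : (D * u ^ η * (1 / b) ^ p) ^ (1 / p) =
        D ^ (1 / p) * u ^ (η / p) * (1 / b) := by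
      rw [Real.mul_rpow (by positivity) (by positivity),
        Real.mul_rpow hD.le (by positivity),
        ← Real.rpow_mul hu0.le, ← Real.rpow_mul (by positivity : (0:ℝ) ≤ 1 / b),
        mul_one_div, mul_one_div_cancel hp0.ne', Real.rpow_one]
    have hDm : D ^ (1 / p) ≤ max D 1 := by
      rcases le_total 1 D with hD1 | hD1
      · calc D ^ (1 / p) ≤ D ^ (1:ℝ) :=
              Real.rpow_le_rpow_of_exponent_le hD1 (by
                rw [div_le_one hp0]; exact hp)
          _ = D := Real.rpow_one D
          _ ≤ max D 1 := le_max_left _ _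
      · calc D ^ (1 / p) ≤ 1 := Real.rpow_le_one hD.le hD1 (by positivity)
          _ ≤ max D 1 := le_max_right _ _
    have hbinv : (1 : ℝ) / b = A * M / (δ * C₂) := by
      rw [hb_def, hc_def]
      field_simp
    calc (ωQ⁻¹ * J) ^ (1 / p) ≤ D ^ (1 / p) * u ^ (η / p) * (1 / b) := by rw [← h2]; exact h1
      _ ≤ max D 1 * u ^ (η / p) * (1 / b) := by
          gcongr
      _ = (max D 1 / (δ * C₂)) * (u ^ (η / p) * A) * M := by
          rw [hbinv]; ring
      _ = (max D 1 / (δ * C₂)) * u ^ ((N0 + 1) * θ₁ + η / p) * M := by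
          rw [hA_def, ← Real.rpow_add hu0, add_comm (η / p)]
  exact hQgoal
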